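/- In the SIR live-edge model, for every subset E' ⊆ E and every edge e ∈ E \ E', it holds that P(e ∈ 𝒢_SIR and E' ∩ 𝒢_SIR = ∅) ≤ P(e ∈ 𝒢_SIR) · P(E' ∩ 𝒢_SIR = ∅); in particular, whenever P(E' ∩ 𝒢_SIR = ∅) > 0, the conditional probability P(e ∈ 𝒢_SIR | E' ∩ 𝒢_SIR = ∅) is at most P(e ∈ 𝒢_SIR). -/

import Mathlib

open MeasureTheory ProbabilityTheory

/-- `u` reaches `v` in the edge set `H`. -/
def reaches {V : Type*} (H : Finset (V × V)) (u v : V) : Prop :=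
  Relation.ReflTransGen (fun x y => (x, y) ∈ H) u v


lemma decomp_aux {Ω : Type*} [MeasurableSpace Ω] (μ : Measure Ω) {α : Type*}
    [MeasurableSpace α] [MeasurableSingletonClass α] [Countable α]
    {X : Ω → ℕ} {Y : Ω → α} (hX : Measurable X) (hY : Measurable Y)
    (h : IndepFun X Y μ) (t : α → Set ℕ) :
    μ {ω | X ω ∈ t (Y ω)} = ∑' a : α, μ (Y ⁻¹' {a}) * μ (X ⁻¹' t a) := by
  have hset : {ω | X ω ∈ t (Y ω)} = ⋃ a : α, Y ⁻¹' {a} ∩ X ⁻¹' t a := by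
    ext ω
    simp only [Set.mem_setOf_eq, Set.mem_iUnion, Set.mem_inter_iff, Set.mem_preimage,
      Set.mem_singleton_iff]
    exact ⟨fun h => ⟨Y ω, rfl, h⟩, fun ⟨a, ha, hx⟩ => ha ▸ hx⟩
  rw [hset, measure_iUnion]
  · refine tsum_congr fun a => ?_
    exact h.symm.measure_inter_preimage_eq_mul ({a} : Set α) (t a) (measurableSet_singleton a)
      ((t a).to_countable.measurableSet)
  · intro a b hab
    refine Set.disjoint_left.mpr ?_
    rintro ω ⟨ha, -⟩ ⟨hb, -⟩
    exact hab (ha.symm.trans hb)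
  · intro a
    exact (hY (measurableSet_singleton a)).inter (hX ((t a).to_countable.measurableSet))

lemma key_ineq {Ω : Type*} [MeasurableSpace Ω] (μ : Measure Ω) [IsProbabilityMeasure μ]
    {X : Ω → ℕ} (hX : Measurable X) (n : ℕ) (m : ℕ∞) :
    μ {ω | n ≤ X ω ∧ (X ω : ℕ∞) < m} ≤ μ {ω | n ≤ X ω} * μ {ω | (X ω : ℕ∞) < m} := by
  rcases le_or_gt m (n : ℕ∞) with hm | hm
  · have : {ω | n ≤ X ω ∧ (X ω : ℕ∞) < m} = ∅ := by
      ext ω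
      simp only [Set.mem_setOf_eq, Set.mem_empty_iff_false, iff_false, not_and, not_lt]
      intro h1
      exact le_trans hm (Nat.cast_le.mpr h1)
    simp [this]
  · set a := μ {ω | (X ω : ℕ∞) < (n : ℕ∞)} with ha
    set q := μ {ω | (X ω : ℕ∞) < m} with hq
    have hmeasX : ∀ s : Set ℕ, MeasurableSet (X ⁻¹' s) := fun s =>
      hX (s.to_countable.measurableSet)
    have hm1 : MeasurableSet {ω | (X ω : ℕ∞) < (n:ℕ∞)} := by
      have : {ω | (X ω : ℕ∞) < (n:ℕ∞)} = X ⁻¹' {x | (x:ℕ∞) < (n:ℕ∞)} := rfl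
      rw [this]; exact hmeasX _
    have hm2 : MeasurableSet {ω | n ≤ X ω ∧ (X ω : ℕ∞) < m} := by
      have : {ω | n ≤ X ω ∧ (X ω : ℕ∞) < m} = X ⁻¹' {x | n ≤ x ∧ (x:ℕ∞) < m} := rfl
      rw [this]; exact hmeasX _
    have hsplit : μ {ω | n ≤ X ω ∧ (X ω : ℕ∞) < m} + a = q := by
      rw [← measure_union ?_ hm1]
      · congr 1
        ext ω
        simp only [Set.mem_union, Set.mem_setOf_eq]
        constructor
        · rintro (⟨-, h⟩ | h)
          · exact h
          · exact lt_trans h hm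
        · intro h
          rcases le_or_gt n (X ω) with h' | h'
          · exact Or.inl ⟨h', h⟩
          · exact Or.inr (by exact_mod_cast Nat.cast_lt.mpr h')
      · refine Set.disjoint_left.mpr ?_
        rintro ω ⟨h1, -⟩ h2
        simp only [Set.mem_setOf_eq] at h2
        exact absurd (Nat.cast_lt.mp h2) (not_lt.mpr h1)
    have hcompl : μ {ω | n ≤ X ω} = 1 - a := by
      have hs : {ω | n ≤ X ω} = {ω | (X ω : ℕ∞) < (n:ℕ∞)}ᶜ := by
        ext ω; simp [not_lt, Nat.cast_le]
      rw [hs, measure_compl hm1 (measure_ne_top μ _), measure_univ]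
    have ha1 : a ≤ 1 := prob_le_one
    have hq1 : q ≤ 1 := prob_le_one
    rw [hcompl]
    rw [← ENNReal.add_le_add_iff_right (show a * q ≠ ⊤ from
      ENNReal.mul_ne_top (measure_ne_top μ _) (measure_ne_top μ _))]
    have h1 : (1 - a) * q + a * q = q := by
      rw [← add_mul, tsub_add_cancel_of_le ha1, one_mul]
    have h2 : a * q ≤ a := by
      calc a * q ≤ a * 1 := mul_le_mul_right hq1 a
      _ = a := mul_one a
    calc μ {ω | n ≤ X ω ∧ (X ω : ℕ∞) < m} + a * q
        ≤ μ {ω | n ≤ X ω ∧ (X ω : ℕ∞) < m} + a := add_le_add_right h2 _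
      _ = q := hsplit
      _ = (1 - a) * q + a * q := h1.symm

/-- Positive correlation in the SIR live-edge model: for any `E' ⊆ E` and any edge
`e ∈ E \ E'`, `P(e ∈ 𝒢_SIR and E' ∩ 𝒢_SIR = ∅) ≤ P(e ∈ 𝒢_SIR) · P(E' ∩ 𝒢_SIR = ∅)`;
in particular the conditional probability of `e` being live given that all edges of
`E'` are blocked is at most the unconditional one. -/
theorem stmt_8 {V : Type*} [Fintype V] [DecidableEq V]
    {Ω : Type*} [MeasurableSpace Ω] (μ : Measure Ω) [IsProbabilityMeasure μ]
    (E : Finset (V × V)) (β : V × V → ℝ) (γ : V → ℝ)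
    (hβ : ∀ e ∈ E, 0 < β e ∧ β e ≤ 1) (hγ : ∀ v, 0 < γ v ∧ γ v ≤ 1)
    (R : V → Ω → ℕ) (I : V × V → Ω → ℕ)
    (hRmeas : ∀ v, Measurable (R v)) (hImeas : ∀ e, Measurable (I e))
    (hRdist : ∀ v, ∀ t : ℕ, 1 ≤ t →
      μ {ω | R v ω = t} = ENNReal.ofReal (γ v * (1 - γ v) ^ (t - 1)))
    (hIdist : ∀ e ∈ E, ∀ t : ℕ, 1 ≤ t →
      μ {ω | I e ω = t} = ENNReal.ofReal (β e * (1 - β e) ^ (t - 1)))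
    (hindep : iIndepFun (Sum.elim R I : V ⊕ (V × V) → Ω → ℕ) μ)
    (G : Ω → Finset (V × V))
    (hG : ∀ ω, G ω = E.filter (fun e => I e ω ≤ R e.1 ω))
    (E' : Finset (V × V)) (hE' : E' ⊆ E) (e : V × V) (he : e ∈ E \ E') :
    μ {ω | e ∈ G ω ∧ ∀ f ∈ E', f ∉ G ω} ≤
        μ {ω | e ∈ G ω} * μ {ω | ∀ f ∈ E', f ∉ G ω} ∧
    (μ {ω | ∀ f ∈ E', f ∉ G ω} ≠ 0 →
      ProbabilityTheory.cond μ {ω | ∀ f ∈ E', f ∉ G ω} {ω | e ∈ G ω} ≤ μ {ω | e ∈ G ω}) := by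
  classical
  obtain ⟨heE, heE'⟩ := Finset.mem_sdiff.mp he
  set u := e.1 with hu
  set X : Ω → ℕ := R u with hXdef
  set N : Ω → ℕ := I e with hNdef
  set E'u := E'.filter (fun f => f.1 = u) with hE'udef
  set E'o := E'.filter (fun f => f.1 ≠ u) with hE'odef
  set M : Ω → ℕ∞ := fun ω => E'u.inf (fun f => (I f ω : ℕ∞)) with hMdef
  set c : Ω → Bool := fun ω => decide (∀ f ∈ E'o, R f.1 ω < I f ω) with hcdef
  have hXm : Measurable X := hRmeas u
  have hNm : Measurable N := hImeas e
  -- event descriptions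
  have hAset : {ω | e ∈ G ω} = {ω | N ω ≤ X ω} := by
    ext ω
    simp [hG, heE, hNdef, hXdef, hu]
  have hBiff : ∀ ω, (∀ f ∈ E', f ∉ G ω) ↔ ((X ω : ℕ∞) < M ω ∧ c ω = true) := by
    intro ω
    rw [hMdef]
    rw [Finset.lt_inf_iff (ENat.coe_lt_top (X ω))]
    simp only [hcdef, decide_eq_true_eq]
    constructor
    · intro h
      refine ⟨fun f hf => ?_, fun f hf => ?_⟩
      · rw [hE'udef] at hf
        obtain ⟨hf1, hf2⟩ := Finset.mem_filter.mp hf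
        have := h f hf1
        rw [hG] at this
        simp only [Finset.mem_filter, not_and, not_le] at this
        have hlt := this (hE' hf1)
        rw [hf2] at hlt
        exact_mod_cast Nat.cast_lt.mpr hlt
      · rw [hE'odef] at hf
        obtain ⟨hf1, hf2⟩ := Finset.mem_filter.mp hf
        have := h f hf1
        rw [hG] at this
        simp only [Finset.mem_filter, not_and, not_le] at this
        exact this (hE' hf1)
    · rintro ⟨h1, h2⟩ f hf
      rw [hG]
      simp only [Finset.mem_filter, not_and, not_le]
      intro _
      by_cases hfu : f.1 = u
      · have := h1 f (by rw [hE'udef]; exact Finset.mem_filter.mpr ⟨hf, hfu⟩)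
        rw [hfu]
        exact Nat.cast_lt.mp this
      · exact h2 f (by rw [hE'odef]; exact Finset.mem_filter.mpr ⟨hf, hfu⟩)
  have hBset : {ω | ∀ f ∈ E', f ∉ G ω} = {ω | (X ω : ℕ∞) < M ω ∧ c ω = true} := by
    ext ω; exact hBiff ω
  -- independence setup
  have hκ : ∀ i : V ⊕ (V × V), Measurable (Sum.elim R I i) := by
    rintro (v | f)
    exacts [hRmeas v, hImeas f]
  set tB : Finset (V ⊕ (V × V)) :=
    E'.image Sum.inr ∪ E'o.image (fun f => Sum.inl f.1) with htBdef
  set tD : Finset (V ⊕ (V × V)) := insert (Sum.inr e) tB with htDdef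
  have hmem_inr : ∀ f ∈ E', Sum.inr f ∈ tB := fun f hf =>
    Finset.mem_union_left _ (Finset.mem_image_of_mem _ hf)
  have hmem_inl : ∀ f ∈ E'o, Sum.inl f.1 ∈ tB := fun f hf =>
    Finset.mem_union_right _ (Finset.mem_image_of_mem _ hf)
  have hdisj1 : Disjoint ({Sum.inl u} : Finset (V ⊕ (V × V))) tD := by
    rw [Finset.disjoint_left]
    intro i hi
    rw [Finset.mem_singleton] at hi
    subst hi
    rw [htDdef, htBdef]
    simp only [Finset.mem_insert, Finset.mem_union, Finset.mem_image, not_or]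
    refine ⟨by simp, by simp, ?_⟩
    rintro ⟨f, hf, hfeq⟩
    rw [hE'odef] at hf
    obtain ⟨-, hf2⟩ := Finset.mem_filter.mp hf
    exact hf2 (Sum.inl.inj hfeq)
  have hdisj2 : Disjoint ({Sum.inr e} : Finset (V ⊕ (V × V))) tB := by
    rw [Finset.disjoint_left]
    intro i hi
    rw [Finset.mem_singleton] at hi
    subst hi
    rw [htBdef]
    simp only [Finset.mem_union, Finset.mem_image, not_or]
    refine ⟨?_, by simp⟩
    rintro ⟨f, hf, hfeq⟩
    rw [← Sum.inr.inj hfeq] at heE'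
    exact heE' hf
  -- masking
  set mask : (T : Finset (V ⊕ (V × V))) → ((i : T) → ℕ) → ((V ⊕ (V × V)) → ℕ) :=
    fun T g i => if h : i ∈ T then g ⟨i, h⟩ else 0 with hmaskdef
  have hmaskapp : ∀ (T : Finset (V ⊕ (V × V))) (ω : Ω) (i : V ⊕ (V × V)) (hi : i ∈ T),
      mask T (fun j : T => Sum.elim R I j ω) i = Sum.elim R I i ω := by
    intro T ω i hi
    rw [hmaskdef]
    simp only [dif_pos hi]
  set φD : ((V ⊕ (V × V)) → ℕ) → ℕ × ℕ∞ × Bool := fun h =>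
    (h (Sum.inr e), E'u.inf (fun f => ((h (Sum.inr f) : ℕ∞))),
      decide (∀ f ∈ E'o, h (Sum.inl f.1) < h (Sum.inr f))) with hφDdef
  set φMc : ((V ⊕ (V × V)) → ℕ) → ℕ∞ × Bool := fun h =>
    (E'u.inf (fun f => ((h (Sum.inr f) : ℕ∞))),
      decide (∀ f ∈ E'o, h (Sum.inl f.1) < h (Sum.inr f))) with hφMcdef
  have hMceq : ∀ (T : Finset (V ⊕ (V × V))), (∀ f ∈ E', Sum.inr f ∈ T) →
      (∀ f ∈ E'o, Sum.inl f.1 ∈ T) →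
      ∀ ω, φMc (mask T (fun j : T => Sum.elim R I j ω)) = (M ω, c ω) := by
    intro T hT1 hT2 ω
    simp only [hφMcdef]
    have h1 : E'u.inf (fun f => ((mask T (fun j : T => Sum.elim R I j ω) (Sum.inr f) : ℕ∞)))
        = M ω := by
      rw [hMdef]
      refine Finset.inf_congr rfl fun f hf => ?_
      have hfE' : f ∈ E' := Finset.mem_of_mem_filter f (hE'udef ▸ hf)
      rw [hmaskapp T ω (Sum.inr f) (hT1 f hfE')]
      rfl
    have h2 : (decide (∀ f ∈ E'o, mask T (fun j : T => Sum.elim R I j ω) (Sum.inl f.1)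
        < mask T (fun j : T => Sum.elim R I j ω) (Sum.inr f)) : Bool) = c ω := by
      rw [hcdef]
      refine decide_eq_decide.mpr ?_
      refine forall₂_congr fun f hf => ?_
      have hfE' : f ∈ E' := Finset.mem_of_mem_filter f (hE'odef ▸ hf)
      rw [hmaskapp T ω (Sum.inl f.1) (hT2 f hf), hmaskapp T ω (Sum.inr f) (hT1 f hfE')]
      rfl
    rw [h1, h2]
  -- independence h1 : X ⊥ (N, M, c)
  have hbase1 := (hindep.indepFun_finset {Sum.inl u} tD hdisj1 hκ).comp
    (show Measurable (fun g : ({Sum.inl u} : Finset (V ⊕ (V × V))) → ℕ =>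
      g ⟨Sum.inl u, Finset.mem_singleton_self _⟩) from measurable_pi_apply _)
    (show Measurable (φD ∘ mask tD) from measurable_of_countable _)
  have heqD : ((φD ∘ mask tD) ∘ fun ω (i : tD) => Sum.elim R I i ω)
      = fun ω => (N ω, M ω, c ω) := by
    funext ω
    show φD (mask tD (fun j : tD => Sum.elim R I j ω)) = (N ω, M ω, c ω)
    have he_mem : Sum.inr e ∈ tD := Finset.mem_insert_self _ _
    have h1 : ∀ f ∈ E', Sum.inr f ∈ tD := fun f hf =>
      Finset.mem_insert_of_mem (hmem_inr f hf)
    have h2 : ∀ f ∈ E'o, Sum.inl f.1 ∈ tD := fun f hf =>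
      Finset.mem_insert_of_mem (hmem_inl f hf)
    have hpair := hMceq tD h1 h2 ω
    simp only [hφMcdef, Prod.mk.injEq] at hpair
    simp only [hφDdef, Prod.mk.injEq]
    rw [hmaskapp tD ω (Sum.inr e) he_mem]
    exact ⟨rfl, hpair.1, hpair.2⟩
  have hind1 : IndepFun X (fun ω => (N ω, M ω, c ω)) μ := by
    rw [heqD] at hbase1
    exact hbase1
  -- independence h2 : N ⊥ (M, c)
  have hbase2 := (hindep.indepFun_finset {Sum.inr e} tB hdisj2 hκ).comp
    (show Measurable (fun g : ({Sum.inr e} : Finset (V ⊕ (V × V))) → ℕ =>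
      g ⟨Sum.inr e, Finset.mem_singleton_self _⟩) from measurable_pi_apply _)
    (show Measurable (φMc ∘ mask tB) from measurable_of_countable _)
  have hind2 : IndepFun N (fun ω => (M ω, c ω)) μ := by
    have heq : ((φMc ∘ mask tB) ∘ fun ω (i : tB) => Sum.elim R I i ω)
        = fun ω => (M ω, c ω) := by
      funext ω
      exact hMceq tB hmem_inr hmem_inl ω
    rw [heq] at hbase2
    exact hbase2
  -- measurability of derived maps
  have hrTm : Measurable (fun ω (i : tD) => Sum.elim R I (i : V ⊕ (V × V)) ω) :=
    measurable_pi_lambda _ fun i => hκ i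
  have hrBm : Measurable (fun ω (i : tB) => Sum.elim R I (i : V ⊕ (V × V)) ω) :=
    measurable_pi_lambda _ fun i => hκ i
  have hDm : Measurable (fun ω => (N ω, M ω, c ω)) := by
    rw [← heqD]
    exact (measurable_of_countable (φD ∘ mask tD)).comp hrTm
  have hMcm : Measurable (fun ω => (M ω, c ω)) := by
    have heq : (fun ω => (M ω, c ω))
        = (φMc ∘ mask tB) ∘ fun ω (i : tB) => Sum.elim R I (i : V ⊕ (V × V)) ω := by
      funext ω
      exact (hMceq tB hmem_inr hmem_inl ω).symm
    rw [heq]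
    exact (measurable_of_countable (φMc ∘ mask tB)).comp hrBm
  -- the three slicing target families
  set tfull : ℕ × ℕ∞ × Bool → Set ℕ := fun d =>
    if d.2.2 = true then {x | d.1 ≤ x ∧ (x : ℕ∞) < d.2.1} else ∅ with htfulldef
  set tA : ℕ → Set ℕ := fun n => {x | n ≤ x} with htAdef
  set tC : ℕ∞ × Bool → Set ℕ := fun p =>
    if p.2 = true then {x | (x : ℕ∞) < p.1} else ∅ with htCdef
  have hABfull : {ω | e ∈ G ω ∧ ∀ f ∈ E', f ∉ G ω}
      = {ω | X ω ∈ tfull (N ω, M ω, c ω)} := by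
    ext ω
    simp only [Set.mem_setOf_eq, htfulldef]
    rw [hBiff ω]
    by_cases hc : c ω = true
    · simp only [hc, if_pos rfl]
      constructor
      · rintro ⟨h1, h2, -⟩
        have : e ∈ G ω ↔ N ω ≤ X ω := Set.ext_iff.mp hAset ω
        exact ⟨this.mp h1, h2⟩
      · rintro ⟨h1, h2⟩
        have : e ∈ G ω ↔ N ω ≤ X ω := Set.ext_iff.mp hAset ω
        exact ⟨this.mpr h1, h2, trivial⟩
    · simp only [if_neg hc]
      simp only [Set.mem_empty_iff_false, iff_false]
      rintro ⟨-, -, hcc⟩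
      exact hc hcc
  have hBfull : {ω | ∀ f ∈ E', f ∉ G ω} = {ω | X ω ∈ tC (M ω, c ω)} := by
    ext ω
    simp only [Set.mem_setOf_eq, htCdef]
    rw [hBiff ω]
    by_cases hc : c ω = true
    · simp only [hc, if_pos rfl]
      exact ⟨fun h => h.1, fun h => ⟨h, trivial⟩⟩
    · simp only [if_neg hc]
      simp only [Set.mem_empty_iff_false, iff_false, not_and]
      intro _
      exact hc
  have hAfull : {ω | e ∈ G ω} = {ω | X ω ∈ tA (N ω)} := hAset
  -- derived independences
  have hindXN : IndepFun X N μ := by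
    have := hind1.comp measurable_id (measurable_fst : Measurable (Prod.fst : ℕ × ℕ∞ × Bool → ℕ))
    exact this
  have hindXMc : IndepFun X (fun ω => (M ω, c ω)) μ := by
    have := hind1.comp measurable_id (measurable_snd : Measurable (Prod.snd : ℕ × ℕ∞ × Bool → ℕ∞ × Bool))
    exact this
  -- main inequality
  have hmain : μ {ω | e ∈ G ω ∧ ∀ f ∈ E', f ∉ G ω} ≤
      μ {ω | e ∈ G ω} * μ {ω | ∀ f ∈ E', f ∉ G ω} := by
    rw [hABfull, hAfull, hBfull]
    rw [decomp_aux μ hXm hDm hind1 tfull,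
      decomp_aux μ hXm hNm hindXN tA,
      decomp_aux μ hXm hMcm hindXMc tC]
    have hsingle : ∀ d : ℕ × ℕ∞ × Bool,
        μ ((fun ω => (N ω, M ω, c ω)) ⁻¹' {d})
          = μ (N ⁻¹' {d.1}) * μ ((fun ω => (M ω, c ω)) ⁻¹' {d.2}) := by
      intro d
      have hseteq : (fun ω => (N ω, M ω, c ω)) ⁻¹' {d}
          = N ⁻¹' {d.1} ∩ (fun ω => (M ω, c ω)) ⁻¹' {d.2} := by
        ext ω
        simp only [Set.mem_preimage, Set.mem_singleton_iff, Set.mem_inter_iff, Prod.ext_iff]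
      rw [hseteq]
      exact hind2.measure_inter_preimage_eq_mul _ _ (measurableSet_singleton _)
        (measurableSet_singleton _)
    calc ∑' d : ℕ × ℕ∞ × Bool,
          μ ((fun ω => (N ω, M ω, c ω)) ⁻¹' {d}) * μ (X ⁻¹' tfull d)
        ≤ ∑' d : ℕ × ℕ∞ × Bool,
          (μ (N ⁻¹' {d.1}) * μ (X ⁻¹' tA d.1)) *
            (μ ((fun ω => (M ω, c ω)) ⁻¹' {d.2}) * μ (X ⁻¹' tC d.2)) := by
          refine ENNReal.tsum_le_tsum fun d => ?_
          have hterm : μ (X ⁻¹' tfull d) ≤ μ (X ⁻¹' tA d.1) * μ (X ⁻¹' tC d.2) := by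
            obtain ⟨n, m, b⟩ := d
            cases b
            · simp [htfulldef]
            · have h1 : tfull (n, m, true) = {x | n ≤ x ∧ (x : ℕ∞) < m} := by
                simp [htfulldef]
              have h2 : tC (m, true) = {x : ℕ | (x : ℕ∞) < m} := by
                simp [htCdef]
              have h3 : tA n = {x | n ≤ x} := rfl
              rw [h1, h2, h3]
              exact key_ineq μ hXm n m
          calc μ ((fun ω => (N ω, M ω, c ω)) ⁻¹' {d}) * μ (X ⁻¹' tfull d)
              = (μ (N ⁻¹' {d.1}) * μ ((fun ω => (M ω, c ω)) ⁻¹' {d.2})) * μ (X ⁻¹' tfull d) := by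
                rw [hsingle d]
            _ ≤ (μ (N ⁻¹' {d.1}) * μ ((fun ω => (M ω, c ω)) ⁻¹' {d.2})) *
                (μ (X ⁻¹' tA d.1) * μ (X ⁻¹' tC d.2)) := mul_le_mul_right hterm _
            _ = (μ (N ⁻¹' {d.1}) * μ (X ⁻¹' tA d.1)) *
                (μ ((fun ω => (M ω, c ω)) ⁻¹' {d.2}) * μ (X ⁻¹' tC d.2)) := by
                rw [mul_mul_mul_comm]
      _ = (∑' n : ℕ, μ (N ⁻¹' {n}) * μ (X ⁻¹' tA n)) *
            ∑' p : ℕ∞ × Bool, μ ((fun ω => (M ω, c ω)) ⁻¹' {p}) * μ (X ⁻¹' tC p) := by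
          rw [ENNReal.tsum_prod
            (f := fun (n : ℕ) (p : ℕ∞ × Bool) => (μ (N ⁻¹' {n}) * μ (X ⁻¹' tA n)) *
              (μ ((fun ω => (M ω, c ω)) ⁻¹' {p}) * μ (X ⁻¹' tC p)))]
          simp_rw [ENNReal.tsum_mul_left, ENNReal.tsum_mul_right]
  refine ⟨hmain, fun hne => ?_⟩
  have hBmeasSet : MeasurableSet {ω | ∀ f ∈ E', f ∉ G ω} := by
    rw [hBfull]
    have : {ω | X ω ∈ tC (M ω, c ω)}
        = (fun ω => (X ω, M ω, c ω)) ⁻¹' {p : ℕ × ℕ∞ × Bool | p.1 ∈ tC p.2} := rfl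
    rw [this]
    exact (hXm.prodMk hMcm) ((Set.to_countable _).measurableSet)
  rw [ProbabilityTheory.cond_apply hBmeasSet]
  have hinterswap : {ω | ∀ f ∈ E', f ∉ G ω} ∩ {ω | e ∈ G ω}
      = {ω | e ∈ G ω ∧ ∀ f ∈ E', f ∉ G ω} := by
    ext ω
    simp only [Set.mem_inter_iff, Set.mem_setOf_eq]
    exact ⟨fun h => ⟨h.2, h.1⟩, fun h => ⟨h.2, h.1⟩⟩
  rw [hinterswap]
  calc (μ {ω | ∀ f ∈ E', f ∉ G ω})⁻¹ * μ {ω | e ∈ G ω ∧ ∀ f ∈ E', f ∉ G ω}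
      ≤ (μ {ω | ∀ f ∈ E', f ∉ G ω})⁻¹ *
        (μ {ω | e ∈ G ω} * μ {ω | ∀ f ∈ E', f ∉ G ω}) := mul_le_mul_right hmain _
    _ = μ {ω | e ∈ G ω} *
        ((μ {ω | ∀ f ∈ E', f ∉ G ω})⁻¹ * μ {ω | ∀ f ∈ E', f ∉ G ω}) := by ring
    _ = μ {ω | e ∈ G ω} * 1 := by
        rw [ENNReal.inv_mul_cancel hne (measure_ne_top μ _)]
    _ = μ {ω | e ∈ G ω} := mul_one _
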